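/- Let G be a finite group with a normal subgroup A = Q₁ × ⋯ × Qₜ, where conjugation by G transitively permutes the factors Qᵢ. Let G₁ = N_G(Q₁), choose a representative ĝ_Z ∈ Z for each right coset Z of G₁ in G, and let U₁ be a subgroup of Q₁ that is G₁-intravariant in Q₁ (for every g ∈ G₁ there exists q ∈ Q₁ with U₁^g = U₁^q). Then U = ∏_Z U₁^{ĝ_Z} is a subgroup of A that is G-intravariant in A: for every g ∈ G there exists a ∈ A with U^g = U^a. Moreover, if U₁ is not normal in Q₁ then U is not normal in A. -/

import Mathlib

/-- Conjugation of a subgroup: `conjS g H = g H g⁻¹`. -/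
def conjS {G : Type*} [Group G] (g : G) (H : Subgroup G) : Subgroup G :=
  H.map (MulAut.conj g).toMonoidHom

section aux

variable {G : Type*} [Group G]

lemma mem_conjS {g x : G} {H : Subgroup G} : x ∈ conjS g H ↔ g⁻¹ * x * g ∈ H := by
  rw [conjS, Subgroup.mem_map_equiv, MulAut.conj_symm_apply]

lemma conjS_conjS (g h : G) (H : Subgroup G) : conjS g (conjS h H) = conjS (g * h) H := by
  ext x
  simp only [mem_conjS, mul_inv_rev, mul_assoc]

@[simp] lemma conjS_one (H : Subgroup G) : conjS 1 H = H := by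
  ext x; simp [mem_conjS]

lemma conjS_mono (g : G) {H K : Subgroup G} (h : H ≤ K) : conjS g H ≤ conjS g K :=
  Subgroup.map_mono h

lemma conjS_iSup (g : G) {ι : Sort*} (S : ι → Subgroup G) :
    conjS g (⨆ i, S i) = ⨆ i, conjS g (S i) :=
  Subgroup.map_iSup _ _

lemma conjS_inf (g : G) (H K : Subgroup G) : conjS g (H ⊓ K) = conjS g H ⊓ conjS g K :=
  Subgroup.map_inf H K _ (MulAut.conj g).injective

lemma conjS_eq_iff_mem_normalizer {g : G} {H : Subgroup G} :
    conjS g H = H ↔ g ∈ Subgroup.normalizer (H : Set G) := by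
  rw [SetLike.ext_iff, Subgroup.mem_normalizer_iff'']
  constructor
  · intro h x
    rw [← h x, mem_conjS]
  · intro h x
    rw [mem_conjS, ← h x]

/-- If `a = c * r` with `c ∈ Qj` and `r` centralizing `Qj`, then conjugation of a
subgroup `S ≤ Qj` by `a⁻¹` agrees with conjugation by `c⁻¹`. -/
lemma conjS_inv_mul_centralizer {Qj S : Subgroup G} (hS : S ≤ Qj) {c r : G}
    (hc : c ∈ Qj) (hr : r ∈ Subgroup.centralizer (Qj : Set G)) :
    conjS (c * r)⁻¹ S = conjS c⁻¹ S := by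
  ext x
  simp only [mem_conjS, inv_inv]
  constructor
  · intro hv
    have hQ : r * x * r⁻¹ ∈ Qj := by
      have he : c⁻¹ * (c * r * x * (c * r)⁻¹) * c = r * x * r⁻¹ := by group
      rw [← he]
      exact Subgroup.mul_mem _ (Subgroup.mul_mem _ (Subgroup.inv_mem _ hc) (hS hv)) hc
    have hcm := Subgroup.mem_centralizer_iff.mp hr _ hQ
    -- hcm : (r * x * r⁻¹) * r = r * (r * x * r⁻¹)
    have hx : r * x * r⁻¹ = x := by
      have h2 : r * x = r * (r * x * r⁻¹) := by
        calc r * x = r * x * r⁻¹ * r := by group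
        _ = r * (r * x * r⁻¹) := hcm
      exact (mul_left_cancel h2).symm
    have he : c * r * x * (c * r)⁻¹ = c * (r * x * r⁻¹) * c⁻¹ := by group
    rw [he, hx] at hv
    exact hv
  · intro hw
    have hxQ : x ∈ Qj := by
      have he : x = c⁻¹ * (c * x * c⁻¹) * c := by group
      rw [he]
      exact Subgroup.mul_mem _ (Subgroup.mul_mem _ (Subgroup.inv_mem _ hc) (hS hw)) hc
    have hcm := Subgroup.mem_centralizer_iff.mp hr _ hxQ
    -- hcm : x * r = r * x
    have hx : r * x * r⁻¹ = x := by
      rw [← hcm]; group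
    have he : c * r * x * (c * r)⁻¹ = c * (r * x * r⁻¹) * c⁻¹ := by group
    rw [he, hx]
    exact hw

theorem stmt13_aux {G : Type*} [Group G] [Finite G] {t : ℕ}
    (Q : Fin t → Subgroup G) (A : Subgroup G)
    (hle : ∀ i, Q i ≤ A)
    (hind : iSupIndep Q)
    (hcomm : ∀ i j, i ≠ j → ∀ x ∈ Q i, ∀ y ∈ Q j, x * y = y * x)
    (hperm : ∀ g : G, ∀ i, ∃ j, conjS g (Q i) = Q j)
    (i0 : Fin t)
    (U₁ : Subgroup G) (hU₁ : U₁ ≤ Q i0)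
    (hintra : ∀ g ∈ (Subgroup.normalizer (Q i0 : Set G)),
      ∃ q ∈ Q i0, conjS g⁻¹ U₁ = conjS q⁻¹ U₁)
    (rep : Quotient (QuotientGroup.rightRel (Subgroup.normalizer (Q i0 : Set G))) → G)
    (hrep : ∀ Z, Quotient.mk'' (rep Z) = Z) :
    (⨆ Z, conjS (rep Z)⁻¹ U₁) ≤ A ∧
    (∀ g : G, ∃ a ∈ A,
      conjS g⁻¹ (⨆ Z, conjS (rep Z)⁻¹ U₁) = conjS a⁻¹ (⨆ Z, conjS (rep Z)⁻¹ U₁)) ∧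
    ((¬ ∀ q ∈ Q i0, conjS q U₁ = U₁) →
      ¬ ∀ a ∈ A, conjS a (⨆ Z, conjS (rep Z)⁻¹ U₁) = ⨆ Z, conjS (rep Z)⁻¹ U₁) := by
  classical
  have _finΩ : Fintype (Quotient (QuotientGroup.rightRel (Subgroup.normalizer (Q i0 : Set G)))) :=
    Fintype.ofFinite _
  -- basic coset fact
  have hrel : ∀ x y : G,
      (Quotient.mk'' x : Quotient (QuotientGroup.rightRel (Subgroup.normalizer (Q i0 : Set G)))) =
        Quotient.mk'' y ↔ y * x⁻¹ ∈ (Subgroup.normalizer (Q i0 : Set G)) := by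
    intro x y
    rw [Quotient.eq'']
    exact QuotientGroup.rightRel_apply
  -- the index function φ
  have hφex : ∀ Z : Quotient (QuotientGroup.rightRel (Subgroup.normalizer (Q i0 : Set G))),
      ∃ j, conjS (rep Z)⁻¹ (Q i0) = Q j := fun Z => hperm _ i0
  choose φ hφ using hφex
  have hUZle : ∀ Z, conjS (rep Z)⁻¹ U₁ ≤ Q (φ Z) := by
    intro Z
    rw [← hφ Z]
    exact conjS_mono _ hU₁
  have hφinj : ∀ Z Z', φ Z = φ Z' → Z = Z' := by
    intro Z Z' h
    have h1 : conjS (rep Z)⁻¹ (Q i0) = conjS (rep Z')⁻¹ (Q i0) := by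
      rw [hφ Z, hφ Z', h]
    have h2 : conjS (rep Z' * (rep Z)⁻¹) (Q i0) = Q i0 := by
      have h3 := congrArg (conjS (rep Z')) h1
      rwa [conjS_conjS, conjS_conjS, mul_inv_cancel, conjS_one] at h3
    have h3 : rep Z' * (rep Z)⁻¹ ∈ (Subgroup.normalizer (Q i0 : Set G)) := conjS_eq_iff_mem_normalizer.mp h2
    have h4 := (hrel (rep Z) (rep Z')).mpr h3
    rwa [hrep, hrep] at h4
  have hQcent : ∀ i j : Fin t, i ≠ j → Q i ≤ Subgroup.centralizer (Q j : Set G) := by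
    intro i j hij x hx
    rw [Subgroup.mem_centralizer_iff]
    intro y hy
    exact hcomm j i (fun h => hij h.symm) y hy x hx
  -- Part 1
  have part1 : (⨆ Z, conjS (rep Z)⁻¹ U₁) ≤ A :=
    iSup_le fun Z => (hUZle Z).trans (hle (φ Z))
  refine ⟨part1, ?_, ?_⟩
  · -- Part 2: intravariance
    intro g
    set ψ : Quotient (QuotientGroup.rightRel (Subgroup.normalizer (Q i0 : Set G))) →
        Quotient (QuotientGroup.rightRel (Subgroup.normalizer (Q i0 : Set G))) :=
      fun Z => Quotient.mk'' (rep Z * g) with hψdef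
    have hmkmul : ∀ x h : G,
        (Quotient.mk'' (rep (Quotient.mk'' x) * h) :
          Quotient (QuotientGroup.rightRel (Subgroup.normalizer (Q i0 : Set G)))) = Quotient.mk'' (x * h) := by
      intro x h
      rw [hrel]
      have h1 : rep (Quotient.mk'' x) * x⁻¹ ∈ (Subgroup.normalizer (Q i0 : Set G)) :=
        (hrel x (rep (Quotient.mk'' x))).mp (hrep _).symm
      have hgoal : x * h * (rep (Quotient.mk'' x) * h)⁻¹
          = (rep (Quotient.mk'' x) * x⁻¹)⁻¹ := by group
      rw [hgoal]
      exact Subgroup.inv_mem _ h1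
    have hψinv : ∀ Z, (Quotient.mk'' (rep (ψ Z) * g⁻¹) :
        Quotient (QuotientGroup.rightRel (Subgroup.normalizer (Q i0 : Set G)))) = Z := by
      intro Z
      have h2 : (Quotient.mk'' (rep (ψ Z) * g⁻¹) :
          Quotient (QuotientGroup.rightRel (Subgroup.normalizer (Q i0 : Set G)))) =
          Quotient.mk'' (rep Z * g * g⁻¹) := hmkmul (rep Z * g) g⁻¹
      rw [h2, mul_inv_cancel_right, hrep]
    have hψinv' : ∀ Z, ψ (Quotient.mk'' (rep Z * g⁻¹)) = Z := by
      intro Z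
      have h2 : ψ (Quotient.mk'' (rep Z * g⁻¹)) = Quotient.mk'' (rep Z * g⁻¹ * g) :=
        hmkmul (rep Z * g⁻¹) g
      rw [h2, inv_mul_cancel_right, hrep]
    have hψbij : Function.Bijective ψ := by
      constructor
      · intro Z Z' h
        have h2 := congrArg (fun W => (Quotient.mk'' (rep W * g⁻¹) :
          Quotient (QuotientGroup.rightRel (Subgroup.normalizer (Q i0 : Set G))))) h
        simpa [hψinv] using h2
      · intro Z
        exact ⟨Quotient.mk'' (rep Z * g⁻¹), hψinv' Z⟩
    -- h_Z ∈ G₁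
    have hhZ : ∀ Z, (rep Z * g) * (rep (ψ Z))⁻¹ ∈ (Subgroup.normalizer (Q i0 : Set G)) := by
      intro Z
      have h1 : (Quotient.mk'' (rep (ψ Z)) :
          Quotient (QuotientGroup.rightRel (Subgroup.normalizer (Q i0 : Set G)))) = Quotient.mk'' (rep Z * g) := by
        rw [hrep]
      exact (hrel _ _).mp h1
    -- choose q_Z
    have hqZex : ∀ Z, ∃ q ∈ Q i0,
        conjS ((rep Z * g) * (rep (ψ Z))⁻¹)⁻¹ U₁ = conjS q⁻¹ U₁ :=
      fun Z => hintra _ (hhZ Z)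
    choose qZ hqZmem hqZeq using hqZex
    set b : Quotient (QuotientGroup.rightRel (Subgroup.normalizer (Q i0 : Set G))) → G :=
      fun Z => (rep (ψ Z))⁻¹ * qZ Z * rep (ψ Z) with hbdef
    have hbmem : ∀ Z, b Z ∈ Q (φ (ψ Z)) := by
      intro Z
      rw [← hφ (ψ Z), mem_conjS]
      have he : ((rep (ψ Z))⁻¹)⁻¹ * b Z * (rep (ψ Z))⁻¹ = qZ Z := by
        simp only [hbdef]; group
      rw [he]
      exact hqZmem Z
    have key1 : ∀ Z, conjS g⁻¹ (conjS (rep Z)⁻¹ U₁) = conjS (b Z)⁻¹ (conjS (rep (ψ Z))⁻¹ U₁) := by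
      intro Z
      rw [conjS_conjS, conjS_conjS]
      have e1 : g⁻¹ * (rep Z)⁻¹ = ((rep Z * g) * (rep (ψ Z))⁻¹ * rep (ψ Z))⁻¹ := by group
      rw [e1]
      have e3 : ((rep Z * g) * (rep (ψ Z))⁻¹ * rep (ψ Z))⁻¹
          = (rep (ψ Z))⁻¹ * ((rep Z * g) * (rep (ψ Z))⁻¹)⁻¹ := by group
      rw [e3, ← conjS_conjS, hqZeq Z, conjS_conjS]
      congr 1
      simp only [hbdef]
      group
    -- reindexing
    set e : Quotient (QuotientGroup.rightRel (Subgroup.normalizer (Q i0 : Set G))) ≃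
        Quotient (QuotientGroup.rightRel (Subgroup.normalizer (Q i0 : Set G))) :=
      Equiv.ofBijective ψ hψbij with hedef
    set c : Quotient (QuotientGroup.rightRel (Subgroup.normalizer (Q i0 : Set G))) → G :=
      fun W => b (e.symm W) with hcdef
    have hcψ : ∀ Z, c (ψ Z) = b Z := by
      intro Z
      simp only [hcdef]
      congr 1
      have h1 : ψ Z = e Z := rfl
      rw [h1, Equiv.symm_apply_apply]
    have hcmem : ∀ W, c W ∈ Q (φ W) := by
      intro W
      have h1 : ψ (e.symm W) = W := e.apply_symm_apply W
      have h2 := hbmem (e.symm W)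
      rw [h1] at h2
      exact h2
    have hccomm : ((Finset.univ :
        Finset (Quotient (QuotientGroup.rightRel (Subgroup.normalizer (Q i0 : Set G))))) : Set _).Pairwise
        (Function.onFun Commute c) := by
      intro W _ W' _ hWW'
      have hne : φ W ≠ φ W' := fun h => hWW' (hφinj _ _ h)
      exact hcomm (φ W) (φ W') hne (c W) (hcmem W) (c W') (hcmem W')
    set a : G := Finset.univ.noncommProd c hccomm with hadef
    have haA : a ∈ A := Subgroup.noncommProd_mem A hccomm fun W _ => hle (φ W) (hcmem W)
    have key2 : ∀ W, conjS a⁻¹ (conjS (rep W)⁻¹ U₁) = conjS (c W)⁻¹ (conjS (rep W)⁻¹ U₁) := by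
      intro W
      have hsplit := Finset.mul_noncommProd_erase Finset.univ (Finset.mem_univ W) c hccomm
      rw [hadef, ← hsplit]
      apply conjS_inv_mul_centralizer (hUZle W) (hcmem W)
      apply Subgroup.noncommProd_mem
      intro W' hW'
      have hne : W' ≠ W := Finset.ne_of_mem_erase hW'
      have hne2 : φ W' ≠ φ W := fun h => hne (hφinj _ _ h)
      exact hQcent (φ W') (φ W) hne2 (hcmem W')
    refine ⟨a, haA, ?_⟩
    rw [conjS_iSup, conjS_iSup]
    have step1 : (⨆ Z, conjS g⁻¹ (conjS (rep Z)⁻¹ U₁)) =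
        ⨆ Z, conjS (c (ψ Z))⁻¹ (conjS (rep (ψ Z))⁻¹ U₁) := by
      apply iSup_congr
      intro Z
      rw [hcψ Z]
      exact key1 Z
    rw [step1]
    have step2 : (⨆ Z, conjS (c (ψ Z))⁻¹ (conjS (rep (ψ Z))⁻¹ U₁)) =
        ⨆ W, conjS (c W)⁻¹ (conjS (rep W)⁻¹ U₁) :=
      Function.Surjective.iSup_comp (f := ψ) hψbij.2
        (fun W => conjS (c W)⁻¹ (conjS (rep W)⁻¹ U₁))
    rw [step2]
    exact iSup_congr fun W => (key2 W).symm
  · -- Part 3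
    intro hnotnorm hnorm
    apply hnotnorm
    intro q hq
    set Z₀ : Quotient (QuotientGroup.rightRel (Subgroup.normalizer (Q i0 : Set G))) := Quotient.mk'' 1 with hZ₀
    have hrepZ₀ : rep Z₀ ∈ (Subgroup.normalizer (Q i0 : Set G)) := by
      have h1 : (Quotient.mk'' (1 : G) :
          Quotient (QuotientGroup.rightRel (Subgroup.normalizer (Q i0 : Set G)))) = Quotient.mk'' (rep Z₀) :=
        (hrep Z₀).symm
      have h2 := (hrel _ _).mp h1
      simpa using h2
    obtain ⟨q₀, hq₀mem, hq₀eq⟩ := hintra (rep Z₀) hrepZ₀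
    have hQφZ₀ : Q (φ Z₀) = Q i0 := by
      rw [← hφ Z₀]
      exact conjS_eq_iff_mem_normalizer.mpr (Subgroup.inv_mem _ hrepZ₀)
    have hRcent : (⨆ j, ⨆ (_ : j ≠ φ Z₀), Q j) ≤
        Subgroup.centralizer (Q (φ Z₀) : Set G) :=
      iSup_le fun j => iSup_le fun hj => hQcent j (φ Z₀) hj
    have hQleR : ∀ j, j ≠ φ Z₀ → Q j ≤ ⨆ j, ⨆ (_ : j ≠ φ Z₀), Q j := fun j hj =>
      le_iSup_of_le j (le_iSup_of_le hj le_rfl)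
    -- key claim
    have claim : ∀ x ∈ (⨆ Z, conjS (rep Z)⁻¹ U₁),
        ∃ y ∈ conjS (rep Z₀)⁻¹ U₁, x * y⁻¹ ∈ ⨆ j, ⨆ (_ : j ≠ φ Z₀), Q j := by
      intro x hx
      refine Subgroup.iSup_induction (fun Z => conjS (rep Z)⁻¹ U₁)
        (C := fun w => ∃ y ∈ conjS (rep Z₀)⁻¹ U₁,
          w * y⁻¹ ∈ ⨆ j, ⨆ (_ : j ≠ φ Z₀), Q j) hx ?_ ?_ ?_
      · intro Z u huZ
        by_cases hZZ : Z = Z₀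
        · subst hZZ
          exact ⟨u, huZ, by simpa using Subgroup.one_mem _⟩
        · refine ⟨1, Subgroup.one_mem _, ?_⟩
          simp only [inv_one, mul_one]
          have hne : φ Z ≠ φ Z₀ := fun h => hZZ (hφinj _ _ h)
          exact hQleR (φ Z) hne (hUZle Z huZ)
      · exact ⟨1, Subgroup.one_mem _, by simpa using Subgroup.one_mem _⟩
      · rintro u v ⟨y₁, hy₁, hr₁⟩ ⟨y₂, hy₂, hr₂⟩
        refine ⟨y₁ * y₂, Subgroup.mul_mem _ hy₁ hy₂, ?_⟩
        have hy₁Q : y₁ ∈ Q (φ Z₀) := hUZle Z₀ hy₁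
        have hcent := Subgroup.mem_centralizer_iff.mp (hRcent hr₂) y₁ hy₁Q
        -- hcent : y₁ * (v * y₂⁻¹) = (v * y₂⁻¹) * y₁
        have heq : u * v * (y₁ * y₂)⁻¹ = (u * y₁⁻¹) * (y₁ * (v * y₂⁻¹) * y₁⁻¹) := by
          group
        have heq2 : y₁ * (v * y₂⁻¹) * y₁⁻¹ = v * y₂⁻¹ := by
          rw [hcent]; group
        rw [heq, heq2]
        exact Subgroup.mul_mem _ hr₁ hr₂
    -- U ⊓ Q i0 = UZ Z₀
    have hinf : (⨆ Z, conjS (rep Z)⁻¹ U₁) ⊓ Q i0 = conjS (rep Z₀)⁻¹ U₁ := by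
      apply le_antisymm
      · rintro x ⟨hxU, hxQ⟩
        obtain ⟨y, hy, hxy⟩ := claim x hxU
        have hy' : y ∈ Q (φ Z₀) := hUZle Z₀ hy
        have hx' : x ∈ Q (φ Z₀) := by rw [hQφZ₀]; exact hxQ
        have hmem : x * y⁻¹ ∈ Q (φ Z₀) ⊓ ⨆ j, ⨆ (_ : j ≠ φ Z₀), Q j :=
          ⟨Subgroup.mul_mem _ hx' (Subgroup.inv_mem _ hy'), hxy⟩
        have hdisj : Q (φ Z₀) ⊓ (⨆ j, ⨆ (_ : j ≠ φ Z₀), Q j) = ⊥ := (hind (φ Z₀)).eq_bot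
        rw [hdisj] at hmem
        have h1 : x * y⁻¹ = 1 := hmem
        have h2 : x = y := by rwa [mul_inv_eq_one] at h1
        rw [h2]
        exact hy
      · apply le_inf
        · exact le_iSup (fun Z => conjS (rep Z)⁻¹ U₁) Z₀
        · exact (hUZle Z₀).trans (le_of_eq hQφZ₀)
    -- conclude
    have hconj : ∀ p ∈ Q i0, conjS p (conjS (rep Z₀)⁻¹ U₁) = conjS (rep Z₀)⁻¹ U₁ := by
      intro p hp
      rw [← hinf, conjS_inf, hnorm p (hle i0 hp),
        conjS_eq_iff_mem_normalizer.mpr (Subgroup.le_normalizer hp)]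
    have hp : q₀⁻¹ * q * q₀ ∈ Q i0 :=
      Subgroup.mul_mem _ (Subgroup.mul_mem _ (Subgroup.inv_mem _ hq₀mem) hq) hq₀mem
    have h5 := hconj _ hp
    rw [hq₀eq, conjS_conjS] at h5
    have h6 := congrArg (conjS q₀) h5
    rw [conjS_conjS, conjS_conjS] at h6
    have e1 : q₀ * (q₀⁻¹ * q * q₀ * q₀⁻¹) = q := by group
    have e2 : q₀ * q₀⁻¹ = 1 := by group
    rw [e1, e2, conjS_one] at h6
    exact h6

end aux

theorem stmt13 {G : Type*} [Group G] [Finite G] {t : ℕ} (ht : 0 < t)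
    (Q : Fin t → Subgroup G) (A : Subgroup G) [A.Normal]
    (hle : ∀ i, Q i ≤ A) (hsupA : A = ⨆ i, Q i)
    (hind : iSupIndep Q)
    (hcomm : ∀ i j, i ≠ j → ∀ x ∈ Q i, ∀ y ∈ Q j, x * y = y * x)
    (hperm : ∀ g : G, ∀ i, ∃ j, conjS g (Q i) = Q j)
    (htrans : ∀ i j, ∃ g : G, conjS g (Q i) = Q j)
    (U₁ : Subgroup G) (hU₁ : U₁ ≤ Q ⟨0, ht⟩)
    (hintra : ∀ g ∈ (Subgroup.normalizer (Q ⟨0, ht⟩ : Set G)),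
      ∃ q ∈ Q ⟨0, ht⟩, conjS g⁻¹ U₁ = conjS q⁻¹ U₁)
    (rep : Quotient (QuotientGroup.rightRel (Subgroup.normalizer (Q ⟨0, ht⟩ : Set G))) → G)
    (hrep : ∀ Z, Quotient.mk'' (rep Z) = Z) :
    (⨆ Z, conjS (rep Z)⁻¹ U₁) ≤ A ∧
    (∀ g : G, ∃ a ∈ A,
      conjS g⁻¹ (⨆ Z, conjS (rep Z)⁻¹ U₁) = conjS a⁻¹ (⨆ Z, conjS (rep Z)⁻¹ U₁)) ∧
    ((¬ ∀ q ∈ Q ⟨0, ht⟩, conjS q U₁ = U₁) →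
      ¬ ∀ a ∈ A, conjS a (⨆ Z, conjS (rep Z)⁻¹ U₁) = ⨆ Z, conjS (rep Z)⁻¹ U₁) :=
  stmt13_aux Q A hle hind hcomm hperm ⟨0, ht⟩ U₁ hU₁ hintra rep hrep
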